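/- arXiv:1009.4059 — 2 statements merged into one kernel-verified Lean document; each statement's English description precedes it below -/
import Mathlib

section
/- Let X \subset P^1 \times P^1 be a zero-dimensional scheme whose Hilbert matrix M_X has first difference supported in the rectangle [0,a] \times [0,b], and let P = R_h \cap C_k be a point of X of multiplicity 1, where R_h is a (1,0)-line and C_k a (0,1)-line. Let Z = X \ {P}, p = #(Z \cap R_h), q = #(Z \cap C_k). If there exists a separator for P in X of bidegree (q,p), then \Delta M_Z(i,j) = \Delta M_X(i,j) for all (i,j) \ne (q,p), and \Delta M_Z(q,p) = \Delta M_X(q,p) - 1. -/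
open MvPolynomial

noncomputable section

open scoped Classical

/-- The bigraded coordinate ring of `ℙ¹ × ℙ¹`: polynomials in the variables
`x₀, x₁` (the left `Fin 2`) and `y₀, y₁` (the right `Fin 2`). -/
abbrev BiPoly (k : Type) [Field k] := MvPolynomial (Fin 2 ⊕ Fin 2) k

/-- A point of the quadric `Q = ℙ¹ × ℙ¹`. -/
abbrev Pt (k : Type) [Field k] := Projectivization k (Fin 2 → k) × Projectivization k (Fin 2 → k)

variable (k : Type) [Field k]

/-- `f` is bihomogeneous of bidegree `(i,j)`: each monomial has degree `i` in
the `x`-variables and degree `j` in the `y`-variables. -/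
def IsBihomog (i j : ℕ) (f : BiPoly k) : Prop :=
  ∀ d ∈ f.support, d (Sum.inl 0) + d (Sum.inl 1) = i ∧ d (Sum.inr 0) + d (Sum.inr 1) = j

/-- `f` vanishes at a point of `ℙ¹ × ℙ¹` (tested on all representatives). -/
def VanishesAt (f : BiPoly k) (P : Pt k) : Prop :=
  ∀ (u v : Fin 2 → k) (hu : u ≠ 0) (hv : v ≠ 0),
    Projectivization.mk k u hu = P.1 → Projectivization.mk k v hv = P.2 →
    eval (Sum.elim u v) f = 0

/-- The bidegree-`(i,j)` piece of the (saturated) ideal of a reduced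
zero-dimensional scheme `X ⊆ ℙ¹ × ℙ¹`: the `k`-vector space of bihomogeneous
forms of bidegree `(i,j)` vanishing on `X`.  Its dimension is
`h⁰(I_X(i,j)) = dim I(X)_{(i,j)}`. -/
def idealPiece (X : Finset (Pt k)) (i j : ℕ) : Submodule k (BiPoly k) where
  carrier := {f | IsBihomog k i j f ∧ ∀ P ∈ X, VanishesAt k f P}
  zero_mem' := by
    refine ⟨?_, ?_⟩
    · intro d hd; simp at hd
    · intro P _ u v hu hv h1 h2; simp
  add_mem' := by
    rintro f g ⟨hf1, hf2⟩ ⟨hg1, hg2⟩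
    refine ⟨?_, ?_⟩
    · intro d hd
      rcases Finset.mem_union.mp (MvPolynomial.support_add hd) with h | h
      exacts [hf1 d h, hg1 d h]
    · intro P hP u v hu hv h1 h2
      simp [hf2 P hP u v hu hv h1 h2, hg2 P hP u v hu hv h1 h2]
  smul_mem' := by
    rintro c f ⟨hf1, hf2⟩
    refine ⟨?_, ?_⟩
    · intro d hd
      exact hf1 d (MvPolynomial.support_smul hd)
    · intro P hP u v hu hv h1 h2
      rw [smul_eq_C_mul, map_mul, hf2 P hP u v hu hv h1 h2, mul_zero]

/-- The bigraded Hilbert function of a reduced zero-dimensional scheme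
`X ⊆ ℙ¹ × ℙ¹`, as a matrix indexed by `ℤ × ℤ`:
`M_X(i,j) = (i+1)(j+1) - dim I(X)_{(i,j)}` for `i, j ≥ 0`, and `0` otherwise. -/
def hilbMat (X : Finset (Pt k)) (i j : ℤ) : ℤ :=
  if 0 ≤ i ∧ 0 ≤ j then
    (i + 1) * (j + 1) - (Module.finrank k (idealPiece k X i.toNat j.toNat) : ℤ)
  else 0

/-- The first difference of a matrix indexed by `ℤ × ℤ`. -/
def diffMat (M : ℤ → ℤ → ℤ) (i j : ℤ) : ℤ :=
  M i j - M (i - 1) j - M i (j - 1) + M (i - 1) (j - 1)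

/-- A separator of bidegree `(q,p)` for a (multiplicity one) point `P` of the
reduced zero-dimensional scheme `X`: a bihomogeneous form of bidegree `(q,p)`
not vanishing at `P` but vanishing at all other points of `X`. -/
def IsSeparator (X : Finset (Pt k)) (P : Pt k) (q p : ℕ) (f : BiPoly k) : Prop :=
  IsBihomog k q p f ∧ ¬ VanishesAt k f P ∧ ∀ P' ∈ X.erase P, VanishesAt k f P'

namespace Thm31Aux

variable {k : Type} [Field k]

lemma eval_scale {i j : ℕ} {f : BiPoly k} (hf : IsBihomog k i j f)
    (c d : k) (u v : Fin 2 → k) :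
    eval (Sum.elim (c • u) (d • v)) f = c ^ i * d ^ j * eval (Sum.elim u v) f := by
  rw [eval_eq', eval_eq', Finset.mul_sum]
  refine Finset.sum_congr rfl fun m hm => ?_
  obtain ⟨h1, h2⟩ := hf m hm
  rw [Fintype.prod_sum_type, Fintype.prod_sum_type]
  simp only [Sum.elim_inl, Sum.elim_inr, Fin.prod_univ_two, Pi.smul_apply, smul_eq_mul]
  rw [← h1, ← h2]
  ring

lemma vanishesAt_iff {i j : ℕ} {f : BiPoly k} (hf : IsBihomog k i j f) (P : Pt k) :
    VanishesAt k f P ↔ eval (Sum.elim P.1.rep P.2.rep) f = 0 := by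
  constructor
  · intro h
    exact h P.1.rep P.2.rep P.1.rep_nonzero P.2.rep_nonzero P.1.mk_rep P.2.mk_rep
  · intro h u v hu hv h1 h2
    obtain ⟨a, ha⟩ := (Projectivization.mk_eq_mk_iff k u P.1.rep hu P.1.rep_nonzero).1
      (by rw [h1, P.1.mk_rep])
    obtain ⟨b, hb⟩ := (Projectivization.mk_eq_mk_iff k v P.2.rep hv P.2.rep_nonzero).1
      (by rw [h2, P.2.mk_rep])
    have hu' : u = (a : k) • P.1.rep := by rw [← ha]; rfl
    have hv' : v = (b : k) • P.2.rep := by rw [← hb]; rfl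
    rw [hu', hv', eval_scale hf, h, mul_zero]

lemma bihomog_mul {i j i' j' : ℕ} {f g : BiPoly k}
    (hf : IsBihomog k i j f) (hg : IsBihomog k i' j' g) :
    IsBihomog k (i + i') (j + j') (f * g) := by
  intro d hd
  obtain ⟨d1, hd1, d2, hd2, rfl⟩ := Finset.mem_add.1 (MvPolynomial.support_mul f g hd)
  obtain ⟨h1, h2⟩ := hf d1 hd1
  obtain ⟨h3, h4⟩ := hg d2 hd2
  constructor <;> simp only [Finsupp.add_apply] <;> omega

lemma bihomog_X_inl (t : Fin 2) : IsBihomog k 1 0 (X (Sum.inl t) : BiPoly k) := by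
  intro d hd
  rw [MvPolynomial.support_X] at hd
  simp only [Finset.mem_singleton] at hd
  subst hd
  fin_cases t <;> simp [Finsupp.single_apply]

lemma bihomog_X_inr (t : Fin 2) : IsBihomog k 0 1 (X (Sum.inr t) : BiPoly k) := by
  intro d hd
  rw [MvPolynomial.support_X] at hd
  simp only [Finset.mem_singleton] at hd
  subst hd
  fin_cases t <;> simp [Finsupp.single_apply]

lemma sep_succ_left {S : Finset (Pt k)} {P : Pt k} {i j : ℕ}
    (h : ∃ f, IsSeparator k S P i j f) : ∃ f, IsSeparator k S P (i + 1) j f := by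
  obtain ⟨f, hb, hnv, hvan⟩ := h
  have hu := P.1.rep_nonzero
  obtain ⟨t, ht⟩ : ∃ t, P.1.rep t ≠ 0 := by
    by_contra hc
    push_neg at hc
    exact hu (funext hc)
  refine ⟨f * MvPolynomial.X (Sum.inl t), ?_, ?_, ?_⟩
  · exact bihomog_mul hb (bihomog_X_inl t)
  · rw [vanishesAt_iff (bihomog_mul hb (bihomog_X_inl t))]
    rw [map_mul, MvPolynomial.eval_X, Sum.elim_inl]
    rw [vanishesAt_iff hb] at hnv
    exact mul_ne_zero hnv ht
  · intro P' hP' u v hu' hv' h1 h2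
    rw [map_mul, hvan P' hP' u v hu' hv' h1 h2, zero_mul]

lemma sep_succ_right {S : Finset (Pt k)} {P : Pt k} {i j : ℕ}
    (h : ∃ f, IsSeparator k S P i j f) : ∃ f, IsSeparator k S P i (j + 1) f := by
  obtain ⟨f, hb, hnv, hvan⟩ := h
  have hv := P.2.rep_nonzero
  obtain ⟨t, ht⟩ : ∃ t, P.2.rep t ≠ 0 := by
    by_contra hc
    push_neg at hc
    exact hv (funext hc)
  refine ⟨f * MvPolynomial.X (Sum.inr t), ?_, ?_, ?_⟩
  · simpa using bihomog_mul hb (bihomog_X_inr t)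
  · rw [vanishesAt_iff (by simpa using bihomog_mul hb (bihomog_X_inr t))]
    rw [map_mul, MvPolynomial.eval_X, Sum.elim_inr]
    rw [vanishesAt_iff hb] at hnv
    exact mul_ne_zero hnv ht
  · intro P' hP' u v hu' hv' h1 h2
    rw [map_mul, hvan P' hP' u v hu' hv' h1 h2, zero_mul]

lemma sep_mono {S : Finset (Pt k)} {P : Pt k} {i j i' j' : ℕ} (hi : i ≤ i') (hj : j ≤ j')
    (h : ∃ f, IsSeparator k S P i j f) : ∃ f, IsSeparator k S P i' j' f := by
  have h1 : ∃ f, IsSeparator k S P i' j f := by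
    induction i', hi using Nat.le_induction with
    | base => exact h
    | succ n hn ih => exact sep_succ_left ih
  induction j', hj using Nat.le_induction with
  | base => exact h1
  | succ n hn ih => exact sep_succ_right ih
lemma idealPiece_le_restrict (S : Finset (Pt k)) (i j : ℕ) :
    idealPiece k S i j ≤ MvPolynomial.restrictTotalDegree (Fin 2 ⊕ Fin 2) k (i + j) := by
  rintro f ⟨hb, -⟩
  rw [MvPolynomial.mem_restrictTotalDegree]
  apply Finset.sup_le
  intro d hd
  obtain ⟨h1, h2⟩ := hb d hd
  have : (d.sum fun _ e => e) = ∑ x : Fin 2 ⊕ Fin 2, d x := by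
    rw [Finsupp.sum]
    exact Finset.sum_subset (Finset.subset_univ _) (by
      intro x _ hx
      simpa using hx)
  rw [this, Fintype.sum_sum_type, Fin.sum_univ_two, Fin.sum_univ_two, h1, h2]

instance idealPiece_fd (S : Finset (Pt k)) (i j : ℕ) :
    FiniteDimensional k (idealPiece k S i j) :=
  Submodule.finiteDimensional_of_le (idealPiece_le_restrict S i j)

/-- the evaluation at fixed representatives, as a linear map -/
def evalLin (u v : Fin 2 → k) : BiPoly k →ₗ[k] k where
  toFun f := eval (Sum.elim u v) f
  map_add' f g := by simp
  map_smul' c f := by simp [MvPolynomial.smul_eq_C_mul]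

@[simp] lemma evalLin_apply (u v : Fin 2 → k) (f : BiPoly k) :
    evalLin u v f = eval (Sum.elim u v) f := rfl

lemma idealPiece_erase_eq_inf (S : Finset (Pt k)) {P : Pt k} (hP : P ∈ S) (i j : ℕ) :
    idealPiece k S i j = idealPiece k (S.erase P) i j ⊓ LinearMap.ker (evalLin P.1.rep P.2.rep) := by
  ext f
  constructor
  · rintro ⟨hb, hvan⟩
    refine ⟨⟨hb, fun P' hP' => hvan P' (Finset.mem_of_mem_erase hP')⟩, ?_⟩
    have h := hvan P hP
    rw [vanishesAt_iff hb P] at h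
    simpa [LinearMap.mem_ker] using h
  · rintro ⟨⟨hb, hvan⟩, hker⟩
    refine ⟨hb, fun Q hQ => ?_⟩
    by_cases hQP : Q = P
    · subst hQP
      rw [vanishesAt_iff hb _]
      simpa [LinearMap.mem_ker] using hker
    · exact hvan Q (Finset.mem_erase.2 ⟨hQP, hQ⟩)

lemma finrank_erase_of_sep (S : Finset (Pt k)) {P : Pt k} (hP : P ∈ S) {i j : ℕ}
    (hsep : ∃ f, IsSeparator k S P i j f) :
    Module.finrank k (idealPiece k (S.erase P) i j) =
      Module.finrank k (idealPiece k S i j) + 1 := by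
  obtain ⟨f₀, hb₀, hnv₀, hvan₀⟩ := hsep
  set E := evalLin (k := k) P.1.rep P.2.rep with hE
  set W := idealPiece k (S.erase P) i j with hW
  have hf₀W : f₀ ∈ W := ⟨hb₀, hvan₀⟩
  have hf₀ : E f₀ ≠ 0 := fun hcon =>
    hnv₀ ((vanishesAt_iff hb₀ P).2 (by exact hcon))
  have hker : Module.finrank k (LinearMap.ker (E.domRestrict W)) =
      Module.finrank k (idealPiece k S i j) := by
    rw [LinearMap.ker_domRestrict]
    have h1 : Submodule.comap W.subtype (LinearMap.ker E)
        = Submodule.comap W.subtype (W ⊓ LinearMap.ker E) := by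
      rw [Submodule.comap_inf, Submodule.comap_subtype_self, top_inf_eq]
    rw [h1, (Submodule.comapSubtypeEquivOfLe inf_le_left).finrank_eq,
      ← idealPiece_erase_eq_inf S hP i j]
  have hrange : LinearMap.range (E.domRestrict W) = ⊤ := by
    rw [LinearMap.range_eq_top]
    intro c
    refine ⟨(c / E f₀) • ⟨f₀, hf₀W⟩, ?_⟩
    rw [map_smul, LinearMap.domRestrict_apply, smul_eq_mul]
    field_simp
  have := LinearMap.finrank_range_add_finrank_ker (E.domRestrict W)
  rw [hrange, finrank_top, Module.finrank_self, hker] at this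
  omega
lemma eval_aeval (σ : (Fin 2 ⊕ Fin 2) → Polynomial k) (c : k) (f : BiPoly k) :
    Polynomial.eval c (MvPolynomial.aeval σ f) =
      eval (fun x => Polynomial.eval c (σ x)) f := by
  induction f using MvPolynomial.induction_on with
  | C a => simp
  | add p q hp hq => simp [hp, hq]
  | mul_X p n hp => simp [hp]

lemma natDegree_aeval_le (f : BiPoly k) (σ : (Fin 2 ⊕ Fin 2) → Polynomial k) (n : ℕ)
    (h : ∀ d ∈ f.support, ∑ x : Fin 2 ⊕ Fin 2, d x * (σ x).natDegree ≤ n) :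
    (MvPolynomial.aeval σ f : Polynomial k).natDegree ≤ n := by
  rw [MvPolynomial.aeval_def, MvPolynomial.eval₂_eq]
  apply Polynomial.natDegree_sum_le_of_forall_le
  intro d hd
  refine (Polynomial.natDegree_mul_le).trans ?_
  have h1 : (algebraMap k (Polynomial k) (coeff d f)).natDegree = 0 := Polynomial.natDegree_C _
  rw [h1, zero_add]
  refine (Polynomial.natDegree_prod_le _ _).trans ?_
  refine le_trans (Finset.sum_le_sum fun x _ => Polynomial.natDegree_pow_le) ?_
  refine le_trans (Finset.sum_le_sum_of_subset_of_nonneg (Finset.subset_univ d.support)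
    (fun _ _ _ => Nat.zero_le _)) (h d hd)

lemma two_dim_prop {w : Fin 2 → k} (hw : w ≠ 0) {z : Fin 2 → k}
    (h : z 0 * w 1 = z 1 * w 0) : ∃ μ : k, z = μ • w := by
  by_cases h0 : w 0 = 0
  · have h1 : w 1 ≠ 0 := fun h1 => hw (funext fun t => by fin_cases t <;> assumption)
    have hz0 : z 0 = 0 := by
      have h' := h
      rw [h0, mul_zero] at h'
      exact (mul_eq_zero.1 h').resolve_right h1
    refine ⟨z 1 / w 1, funext fun t => ?_⟩
    fin_cases t
    · show z 0 = z 1 / w 1 * w 0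
      rw [hz0, h0, mul_zero]
    · show z 1 = z 1 / w 1 * w 1
      field_simp
  · refine ⟨z 0 / w 0, funext fun t => ?_⟩
    fin_cases t
    · show z 0 = z 0 / w 0 * w 0
      field_simp
    · show z 1 = z 0 / w 0 * w 1
      rw [div_mul_eq_mul_div, eq_div_iff h0]
      linear_combination -h
lemma card_row_le [Infinite k] {S : Finset (Pt k)} {P : Pt k} {i j : ℕ} {f : BiPoly k}
    (hf : IsSeparator k S P i j f) :
    ((S.erase P).filter (fun P' => P'.1 = P.1)).card ≤ j := by
  obtain ⟨hb, hnv, hvan⟩ := hf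
  by_contra hlt
  push_neg at hlt
  set T := (S.erase P).filter (fun P' => P'.1 = P.1) with hT
  set u := P.1.rep with hudef
  set v := P.2.rep with hvdef
  have hu : u ≠ 0 := P.1.rep_nonzero
  have hvne : v ≠ 0 := P.2.rep_nonzero
  have hfP : eval (Sum.elim u v) f ≠ 0 := fun hc => hnv ((vanishesAt_iff hb P).2 hc)
  obtain ⟨s, hs⟩ := Infinite.exists_notMem_finset
      (insert (v 1 / v 0) (T.image fun P' => P'.2.rep 1 / P'.2.rep 0))
  have hsv : v 1 / v 0 ≠ s := fun h => hs (by rw [← h]; exact Finset.mem_insert_self _ _)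
  have hsw : ∀ P' ∈ T, P'.2.rep 1 / P'.2.rep 0 ≠ s := fun P' hP' h =>
    hs (Finset.mem_insert_of_mem (Finset.mem_image.2 ⟨P', hP', h⟩))
  set e : Fin 2 → k := ![1, s] with he
  have he0 : e 0 = 1 := rfl
  have he1 : e 1 = s := rfl
  have hdet : ∀ w : Fin 2 → k, w ≠ 0 → w 1 / w 0 ≠ s → w 0 * s - w 1 ≠ 0 := by
    intro w hw hns hc
    by_cases h0 : w 0 = 0
    · have h1 : w 1 ≠ 0 := fun h1 => hw (funext fun t => by fin_cases t <;> assumption)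
      rw [h0, zero_mul, zero_sub, neg_eq_zero] at hc
      exact h1 hc
    · apply hns
      rw [div_eq_iff h0]
      linear_combination -hc
  -- z never vanishes
  have hznz : ∀ c : k, (fun t => v t + c * e t) ≠ 0 := by
    intro c hzz
    have hz0 : v 0 + c * e 0 = 0 := congrFun hzz 0
    have hz1 : v 1 + c * e 1 = 0 := congrFun hzz 1
    rw [he0] at hz0
    rw [he1] at hz1
    by_cases hc : c = 0
    · subst hc
      apply hvne
      funext t
      fin_cases t
      · show v 0 = 0; linear_combination hz0
      · show v 1 = 0; linear_combination hz1
    · apply hsv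
      have hv0 : v 0 = -c := by linear_combination hz0
      have hv1 : v 1 = -(c * s) := by linear_combination hz1
      rw [hv0, hv1, neg_div_neg_eq, mul_comm, mul_div_assoc, div_self hc, mul_one]
  set cOf : Pt k → k := fun P' =>
    (v 0 * P'.2.rep 1 - v 1 * P'.2.rep 0) / (P'.2.rep 0 * s - P'.2.rep 1) with hcOf
  -- the z vector is a representative of P'.2
  have hmk : ∀ P' ∈ T, Projectivization.mk k (fun t => v t + cOf P' * e t) (hznz _) = P'.2 := by
    intro P' hP'
    set w := P'.2.rep with hwdef
    have hw : w ≠ 0 := P'.2.rep_nonzero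
    have hdetw : w 0 * s - w 1 ≠ 0 := hdet w hw (hsw P' hP')
    set c := cOf P' with hc
    set z : Fin 2 → k := fun t => v t + c * e t with hz
    have hzprop : z 0 * w 1 = z 1 * w 0 := by
      have hz0 : z 0 = v 0 + c * 1 := by rw [hz]; simp [he0]
      have hz1 : z 1 = v 1 + c * s := by rw [hz]; simp [he1]
      rw [hz0, hz1, hc, hcOf]
      simp only [← hwdef]
      field_simp
      ring
    obtain ⟨μ, hμ⟩ := two_dim_prop hw hzprop
    have hμ0 : μ ≠ 0 := by
      intro h
      rw [h, zero_smul] at hμ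
      exact hznz c hμ
    have : Projectivization.mk k z (hznz c) = Projectivization.mk k w hw := by
      rw [Projectivization.mk_eq_mk_iff]
      refine ⟨Units.mk0 μ hμ0, ?_⟩
      rw [Units.smul_def, Units.val_mk0]
      exact hμ.symm
    rw [this]
    exact P'.2.mk_rep
  -- the polynomial F
  set σp : (Fin 2 ⊕ Fin 2) → Polynomial k :=
    Sum.elim (fun t => Polynomial.C (u t))
      (fun t => Polynomial.C (v t) + Polynomial.X * Polynomial.C (e t)) with hσ
  set F : Polynomial k := MvPolynomial.aeval σp f with hF
  have hFeval : ∀ c : k, F.eval c = eval (Sum.elim u (fun t => v t + c * e t)) f := by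
    intro c
    rw [hF, eval_aeval]
    have hfun : (fun x => Polynomial.eval c (σp x)) = Sum.elim u (fun t => v t + c * e t) := by
      funext x
      rcases x with t | t
      · show Polynomial.eval c (Polynomial.C (u t)) = u t
        simp
      · show Polynomial.eval c (Polynomial.C (v t) + Polynomial.X * Polynomial.C (e t)) = v t + c * e t
        rw [Polynomial.eval_add, Polynomial.eval_C, Polynomial.eval_mul, Polynomial.eval_X,
          Polynomial.eval_C]
    rw [hfun]
  have hFdeg : F.natDegree ≤ j := by
    apply natDegree_aeval_le
    intro d hd
    obtain ⟨h1, h2⟩ := hb d hd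
    have hdeg1 : ∀ a c : k, (Polynomial.C a + Polynomial.X * Polynomial.C c).natDegree ≤ 1 := by
      intro a c
      refine (Polynomial.natDegree_add_le _ _).trans (max_le (by simp) ?_)
      refine (Polynomial.natDegree_mul_le).trans (by simp)
    have hA : ∑ t : Fin 2, d (Sum.inl t) * (σp (Sum.inl t)).natDegree = 0 := by
      have hC : ∀ t : Fin 2, (σp (Sum.inl t)).natDegree = 0 := fun t => Polynomial.natDegree_C _
      rw [Fin.sum_univ_two, hC 0, hC 1, Nat.mul_zero, Nat.mul_zero, Nat.add_zero]
    have hB : ∀ t : Fin 2, d (Sum.inr t) * (σp (Sum.inr t)).natDegree ≤ d (Sum.inr t) := by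
      intro t
      calc d (Sum.inr t) * (σp (Sum.inr t)).natDegree ≤ d (Sum.inr t) * 1 :=
            Nat.mul_le_mul_left _ (hdeg1 (v t) (e t))
        _ = d (Sum.inr t) := Nat.mul_one _
    rw [Fintype.sum_sum_type, hA, zero_add]
    calc ∑ t : Fin 2, d (Sum.inr t) * (σp (Sum.inr t)).natDegree
        ≤ ∑ t : Fin 2, d (Sum.inr t) := Finset.sum_le_sum fun t _ => hB t
      _ = j := by rw [Fin.sum_univ_two, h2]
  have hF0 : F ≠ 0 := by
    intro h
    apply hfP
    have h0 := hFeval 0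
    rw [h] at h0
    simp only [Polynomial.eval_zero] at h0
    have : (fun t => v t + (0:k) * e t) = v := by funext t; ring_nf
    rw [this] at h0
    exact h0.symm
  have hroot : ∀ P' ∈ T, F.eval (cOf P') = 0 := by
    intro P' hP'
    rw [hFeval]
    have hP'S : P' ∈ S.erase P := (Finset.mem_filter.1 hP').1
    have hP'1 : P'.1 = P.1 := (Finset.mem_filter.1 hP').2
    refine hvan P' hP'S u _ hu (hznz _) ?_ (hmk P' hP')
    rw [hP'1]
    exact P.1.mk_rep
  have hinj : Set.InjOn cOf T := by
    intro P1 hP1 P2 hP2 hc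
    have h1 := hmk P1 hP1
    have h2 := hmk P2 hP2
    rw [hc] at h1
    have h2' : P1.2 = P2.2 := by rw [← h1, ← h2]
    have h1' : P1.1 = P2.1 := by
      rw [(Finset.mem_filter.1 hP1).2, (Finset.mem_filter.1 hP2).2]
    exact Prod.ext h1' h2'
  have himg : T.image cOf ⊆ F.roots.toFinset := by
    intro c hc
    obtain ⟨P', hP', rfl⟩ := Finset.mem_image.1 hc
    rw [Multiset.mem_toFinset, Polynomial.mem_roots']
    exact ⟨hF0, hroot P' hP'⟩
  have hcard : T.card ≤ j := by
    calc T.card = (T.image cOf).card := (Finset.card_image_of_injOn hinj).symm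
      _ ≤ F.roots.toFinset.card := Finset.card_le_card himg
      _ ≤ Multiset.card F.roots := Multiset.toFinset_card_le _
      _ ≤ F.natDegree := Polynomial.card_roots' F
      _ ≤ j := hFdeg
  omega
lemma card_col_le [Infinite k] {S : Finset (Pt k)} {P : Pt k} {i j : ℕ} {f : BiPoly k}
    (hf : IsSeparator k S P i j f) :
    ((S.erase P).filter (fun P' => P'.2 = P.2)).card ≤ i := by
  obtain ⟨hb, hnv, hvan⟩ := hf
  by_contra hlt
  push_neg at hlt
  set T := (S.erase P).filter (fun P' => P'.2 = P.2) with hT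
  set u := P.1.rep with hudef
  set v := P.2.rep with hvdef
  have hu : u ≠ 0 := P.1.rep_nonzero
  have hvne : v ≠ 0 := P.2.rep_nonzero
  have hfP : eval (Sum.elim u v) f ≠ 0 := fun hc => hnv ((vanishesAt_iff hb P).2 hc)
  obtain ⟨s, hs⟩ := Infinite.exists_notMem_finset
      (insert (u 1 / u 0) (T.image fun P' => P'.1.rep 1 / P'.1.rep 0))
  have hsu : u 1 / u 0 ≠ s := fun h => hs (by rw [← h]; exact Finset.mem_insert_self _ _)
  have hsw : ∀ P' ∈ T, P'.1.rep 1 / P'.1.rep 0 ≠ s := fun P' hP' h =>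
    hs (Finset.mem_insert_of_mem (Finset.mem_image.2 ⟨P', hP', h⟩))
  set e : Fin 2 → k := ![1, s] with he
  have he0 : e 0 = 1 := rfl
  have he1 : e 1 = s := rfl
  have hdet : ∀ w : Fin 2 → k, w ≠ 0 → w 1 / w 0 ≠ s → w 0 * s - w 1 ≠ 0 := by
    intro w hw hns hc
    by_cases h0 : w 0 = 0
    · have h1 : w 1 ≠ 0 := fun h1 => hw (funext fun t => by fin_cases t <;> assumption)
      rw [h0, zero_mul, zero_sub, neg_eq_zero] at hc
      exact h1 hc
    · apply hns
      rw [div_eq_iff h0]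
      linear_combination -hc
  have hznz : ∀ c : k, (fun t => u t + c * e t) ≠ 0 := by
    intro c hzz
    have hz0 : u 0 + c * e 0 = 0 := congrFun hzz 0
    have hz1 : u 1 + c * e 1 = 0 := congrFun hzz 1
    rw [he0] at hz0
    rw [he1] at hz1
    by_cases hc : c = 0
    · subst hc
      apply hu
      funext t
      fin_cases t
      · show u 0 = 0; linear_combination hz0
      · show u 1 = 0; linear_combination hz1
    · apply hsu
      have hu0 : u 0 = -c := by linear_combination hz0
      have hu1 : u 1 = -(c * s) := by linear_combination hz1
      rw [hu0, hu1, neg_div_neg_eq, mul_comm, mul_div_assoc, div_self hc, mul_one]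
  set cOf : Pt k → k := fun P' =>
    (u 0 * P'.1.rep 1 - u 1 * P'.1.rep 0) / (P'.1.rep 0 * s - P'.1.rep 1) with hcOf
  have hmk : ∀ P' ∈ T, Projectivization.mk k (fun t => u t + cOf P' * e t) (hznz _) = P'.1 := by
    intro P' hP'
    set w := P'.1.rep with hwdef
    have hw : w ≠ 0 := P'.1.rep_nonzero
    have hdetw : w 0 * s - w 1 ≠ 0 := hdet w hw (hsw P' hP')
    set c := cOf P' with hc
    set z : Fin 2 → k := fun t => u t + c * e t with hz
    have hzprop : z 0 * w 1 = z 1 * w 0 := by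
      have hz0 : z 0 = u 0 + c * 1 := by rw [hz]; simp [he0]
      have hz1 : z 1 = u 1 + c * s := by rw [hz]; simp [he1]
      rw [hz0, hz1, hc, hcOf]
      simp only [← hwdef]
      field_simp
      ring
    obtain ⟨μ, hμ⟩ := two_dim_prop hw hzprop
    have hμ0 : μ ≠ 0 := by
      intro h
      rw [h, zero_smul] at hμ
      exact hznz c hμ
    have : Projectivization.mk k z (hznz c) = Projectivization.mk k w hw := by
      rw [Projectivization.mk_eq_mk_iff]
      refine ⟨Units.mk0 μ hμ0, ?_⟩
      rw [Units.smul_def, Units.val_mk0]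
      exact hμ.symm
    rw [this]
    exact P'.1.mk_rep
  set σp : (Fin 2 ⊕ Fin 2) → Polynomial k :=
    Sum.elim (fun t => Polynomial.C (u t) + Polynomial.X * Polynomial.C (e t))
      (fun t => Polynomial.C (v t)) with hσ
  set F : Polynomial k := MvPolynomial.aeval σp f with hF
  have hFeval : ∀ c : k, F.eval c = eval (Sum.elim (fun t => u t + c * e t) v) f := by
    intro c
    rw [hF, eval_aeval]
    have hfun : (fun x => Polynomial.eval c (σp x)) = Sum.elim (fun t => u t + c * e t) v := by
      funext x
      rcases x with t | t
      · show Polynomial.eval c (Polynomial.C (u t) + Polynomial.X * Polynomial.C (e t)) = u t + c * e t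
        rw [Polynomial.eval_add, Polynomial.eval_C, Polynomial.eval_mul, Polynomial.eval_X,
          Polynomial.eval_C]
      · show Polynomial.eval c (Polynomial.C (v t)) = v t
        simp
    rw [hfun]
  have hFdeg : F.natDegree ≤ i := by
    apply natDegree_aeval_le
    intro d hd
    obtain ⟨h1, h2⟩ := hb d hd
    have hdeg1 : ∀ a c : k, (Polynomial.C a + Polynomial.X * Polynomial.C c).natDegree ≤ 1 := by
      intro a c
      refine (Polynomial.natDegree_add_le _ _).trans (max_le (by simp) ?_)
      refine (Polynomial.natDegree_mul_le).trans (by simp)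
    have hA : ∑ t : Fin 2, d (Sum.inr t) * (σp (Sum.inr t)).natDegree = 0 := by
      have hC : ∀ t : Fin 2, (σp (Sum.inr t)).natDegree = 0 := fun t => Polynomial.natDegree_C _
      rw [Fin.sum_univ_two, hC 0, hC 1, Nat.mul_zero, Nat.mul_zero, Nat.add_zero]
    have hB : ∀ t : Fin 2, d (Sum.inl t) * (σp (Sum.inl t)).natDegree ≤ d (Sum.inl t) := by
      intro t
      calc d (Sum.inl t) * (σp (Sum.inl t)).natDegree ≤ d (Sum.inl t) * 1 :=
            Nat.mul_le_mul_left _ (hdeg1 (u t) (e t))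
        _ = d (Sum.inl t) := Nat.mul_one _
    rw [Fintype.sum_sum_type, hA, add_zero]
    calc ∑ t : Fin 2, d (Sum.inl t) * (σp (Sum.inl t)).natDegree
        ≤ ∑ t : Fin 2, d (Sum.inl t) := Finset.sum_le_sum fun t _ => hB t
      _ = i := by rw [Fin.sum_univ_two, h1]
  have hF0 : F ≠ 0 := by
    intro h
    apply hfP
    have h0 := hFeval 0
    rw [h] at h0
    simp only [Polynomial.eval_zero] at h0
    have : (fun t => u t + (0:k) * e t) = u := by funext t; ring_nf
    rw [this] at h0
    exact h0.symm
  have hroot : ∀ P' ∈ T, F.eval (cOf P') = 0 := by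
    intro P' hP'
    rw [hFeval]
    have hP'S : P' ∈ S.erase P := (Finset.mem_filter.1 hP').1
    have hP'2 : P'.2 = P.2 := (Finset.mem_filter.1 hP').2
    refine hvan P' hP'S _ v (hznz _) hvne (hmk P' hP') ?_
    rw [hP'2]
    exact P.2.mk_rep
  have hinj : Set.InjOn cOf T := by
    intro P1 hP1 P2 hP2 hc
    have h1 := hmk P1 hP1
    have h2 := hmk P2 hP2
    rw [hc] at h1
    have h1' : P1.1 = P2.1 := by rw [← h1, ← h2]
    have h2' : P1.2 = P2.2 := by
      rw [(Finset.mem_filter.1 hP1).2, (Finset.mem_filter.1 hP2).2]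
    exact Prod.ext h1' h2'
  have himg : T.image cOf ⊆ F.roots.toFinset := by
    intro c hc
    obtain ⟨P', hP', rfl⟩ := Finset.mem_image.1 hc
    rw [Multiset.mem_toFinset, Polynomial.mem_roots']
    exact ⟨hF0, hroot P' hP'⟩
  have hcard : T.card ≤ i := by
    calc T.card = (T.image cOf).card := (Finset.card_image_of_injOn hinj).symm
      _ ≤ F.roots.toFinset.card := Finset.card_le_card himg
      _ ≤ Multiset.card F.roots := Multiset.toFinset_card_le _
      _ ≤ F.natDegree := Polynomial.card_roots' F
      _ ≤ i := hFdeg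
  omega
lemma idealPiece_erase_eq_of_no_sep {S : Finset (Pt k)} {P : Pt k} {i j : ℕ}
    (h : ¬ ∃ f, IsSeparator k S P i j f) :
    idealPiece k (S.erase P) i j = idealPiece k S i j := by
  ext f
  constructor
  · rintro ⟨hb, hvan⟩
    refine ⟨hb, fun Q hQ => ?_⟩
    by_cases hQP : Q = P
    · subst hQP
      by_contra hnv
      exact h ⟨f, hb, hnv, hvan⟩
    · exact hvan Q (Finset.mem_erase.2 ⟨hQP, hQ⟩)
  · rintro ⟨hb, hvan⟩
    exact ⟨hb, fun Q hQ => hvan Q (Finset.mem_of_mem_erase hQ)⟩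

end Thm31Aux

/-- Theorem 3.1: let `X ⊆ ℙ¹ × ℙ¹` be a zero-dimensional scheme whose first
difference Hilbert function is supported in `[0,a] × [0,b]`, `P = R_h ∩ C_k`
a point of `X` of multiplicity `1`, `Z = X \ {P}`, `p = #(Z ∩ R_h)`,
`q = #(Z ∩ C_k)`.  If there is a separator for `P` of bidegree `(q,p)`, then
`ΔM_Z = ΔM_X` away from `(q,p)` and `ΔM_Z(q,p) = ΔM_X(q,p) - 1`. -/
theorem thm_3_1 (k : Type) [Field k] [IsAlgClosed k]
    (X : Finset (Pt k)) (P : Pt k) (hP : P ∈ X)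
    (a b : ℤ)
    (hsize : ∀ i j : ℤ, a < i ∨ b < j → diffMat (hilbMat k X) i j = 0)
    (p q : ℕ)
    (hp : p = ((X.erase P).filter (fun P' => P'.1 = P.1)).card)
    (hq : q = ((X.erase P).filter (fun P' => P'.2 = P.2)).card)
    (hsep : ∃ f : BiPoly k, IsSeparator k X P q p f) :
    (∀ i j : ℤ, (i, j) ≠ ((q : ℤ), (p : ℤ)) →
      diffMat (hilbMat k (X.erase P)) i j = diffMat (hilbMat k X) i j) ∧
    diffMat (hilbMat k (X.erase P)) q p = diffMat (hilbMat k X) q p - 1 := by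
  have key : ∀ i j : ℕ, (Module.finrank k (idealPiece k (X.erase P) i j) : ℤ) =
      (Module.finrank k (idealPiece k X i j) : ℤ) + (if q ≤ i ∧ p ≤ j then 1 else 0) := by
    intro i j
    by_cases hc : q ≤ i ∧ p ≤ j
    · rw [if_pos hc,
        Thm31Aux.finrank_erase_of_sep X hP (Thm31Aux.sep_mono hc.1 hc.2 hsep)]
      push_cast
      ring
    · have hnone : ¬ ∃ f, IsSeparator k X P i j f := by
        rintro ⟨f, hfsep⟩
        exact hc ⟨by rw [hq]; exact Thm31Aux.card_col_le hfsep,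
          by rw [hp]; exact Thm31Aux.card_row_le hfsep⟩
      rw [if_neg hc, add_zero, Thm31Aux.idealPiece_erase_eq_of_no_sep hnone]
  have hM : ∀ i j : ℤ, hilbMat k (X.erase P) i j =
      hilbMat k X i j - (if (q : ℤ) ≤ i ∧ (p : ℤ) ≤ j then 1 else 0) := by
    intro i j
    unfold hilbMat
    by_cases h0 : 0 ≤ i ∧ 0 ≤ j
    · rw [if_pos h0, if_pos h0]
      have hcond : ((q : ℤ) ≤ i ∧ (p : ℤ) ≤ j) ↔ (q ≤ i.toNat ∧ p ≤ j.toNat) := by omega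
      rw [key i.toNat j.toNat, if_congr hcond rfl rfl]
      split_ifs <;> push_cast <;> ring
    · rw [if_neg h0, if_neg h0,
        if_neg (show ¬((q : ℤ) ≤ i ∧ (p : ℤ) ≤ j) by omega), sub_zero]
  constructor
  · intro i j hne
    have hne' : i ≠ (q : ℤ) ∨ j ≠ (p : ℤ) := by
      by_contra hcon
      push_neg at hcon
      exact hne (by rw [hcon.1, hcon.2])
    unfold diffMat
    rw [hM, hM, hM, hM]
    split_ifs <;> omega
  · unfold diffMat
    rw [hM, hM, hM, hM]
    split_ifs <;> omega

end
end

section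
/- Let X \subset P^1 \times P^1 be a zero-dimensional scheme, P \in X with multiplicity 1, Z = X \ {P}, and fix a (1,0)-line R and a (0,1)-line C through P with p = #(Z \cap R) and q = #(Z \cap C). Then for every bidegree (i,j) with i < q or j < p, h^0(I_Z(i,j)) = h^0(I_X(i,j)); consequently \Delta M_Z(i,j) = \Delta M_X(i,j) whenever i < q or j < p. -/
open MvPolynomial

noncomputable section

open scoped Classical

variable (k : Type) [Field k]

namespace Scratch

variable {k : Type} [Field k]

private lemma aeval_mon (v : Fin 2 → k) (d : (Fin 2 ⊕ Fin 2) →₀ ℕ) (c : k) :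
    aeval (Sum.elim ![Polynomial.X, 1] (fun s => Polynomial.C (v s)) :
        Fin 2 ⊕ Fin 2 → Polynomial k) (monomial d c)
      = Polynomial.C (c * v 0 ^ d (Sum.inr 0) * v 1 ^ d (Sum.inr 1))
          * Polynomial.X ^ d (Sum.inl 0) := by
  rw [aeval_monomial, Finsupp.prod_fintype _ _ (fun s => pow_zero _), Fintype.prod_sum_type,
    Fin.prod_univ_two, Fin.prod_univ_two]
  simp only [Sum.elim_inl, Sum.elim_inr, Matrix.cons_val_zero, Matrix.cons_val_one,
    Matrix.head_cons, one_pow, mul_one, Polynomial.algebraMap_eq, Polynomial.C_mul,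
    Polynomial.C_pow]
  ring

lemma core (i j : ℕ) (f : BiPoly k) (hf : IsBihomog k i j f) (v : Fin 2 → k)
    (T : Finset (Projectivization k (Fin 2 → k))) (hT : i < T.card)
    (H : ∀ c ∈ T, ∀ (u : Fin 2 → k) (hu : u ≠ 0),
        Projectivization.mk k u hu = c → eval (Sum.elim u v) f = 0) :
    ∀ u : Fin 2 → k, eval (Sum.elim u v) f = 0 := by
  set ψ : Fin 2 ⊕ Fin 2 → Polynomial k :=
    Sum.elim ![Polynomial.X, 1] (fun s => Polynomial.C (v s)) with hψ
  set F : Polynomial k := aeval ψ f with hFdef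
  have hevalF : ∀ a : k, F.eval a = eval (Sum.elim ![a, 1] v) f := by
    intro a
    have h0 : F.eval a = (Polynomial.evalRingHom a) (eval₂ (algebraMap k (Polynomial k)) ψ f) := by
      rw [hFdef, aeval_def]; rfl
    rw [h0, eval₂_comp_left]
    have h1 : (Polynomial.evalRingHom a).comp (algebraMap k (Polynomial k)) = RingHom.id k := by
      ext x; simp
    have h2 : ((Polynomial.evalRingHom a) ∘ ψ) = Sum.elim ![a, 1] v := by
      funext s; rcases s with s | s
      · fin_cases s <;> simp [hψ]
      · simp [hψ]
    rw [h1, h2, eval₂_id]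
  have hsum : F = ∑ d ∈ f.support,
      Polynomial.C (coeff d f * v 0 ^ d (Sum.inr 0) * v 1 ^ d (Sum.inr 1))
        * Polynomial.X ^ d (Sum.inl 0) := by
    rw [hFdef]
    conv_lhs => rw [← support_sum_monomial_coeff f]
    rw [map_sum]
    exact Finset.sum_congr rfl fun d _ => aeval_mon v d _
  have hdeg : F.natDegree ≤ i := by
    rw [hsum]
    apply Polynomial.natDegree_sum_le_of_forall_le
    intro d hd
    refine (Polynomial.natDegree_C_mul_le _ _).trans ?_
    rw [Polynomial.natDegree_X_pow]
    have := (hf d hd).1; omega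
  have hcoeff : F.coeff i = eval (Sum.elim ![(1:k), 0] v) f := by
    rw [hsum, Polynomial.finset_sum_coeff]
    conv_rhs => rw [← support_sum_monomial_coeff f]
    rw [map_sum]
    refine Finset.sum_congr rfl fun d hd => ?_
    rw [Polynomial.coeff_C_mul, Polynomial.coeff_X_pow, eval_monomial,
      Finsupp.prod_fintype _ _ (fun s => pow_zero _), Fintype.prod_sum_type]
    simp only [Sum.elim_inl, Sum.elim_inr, Fin.prod_univ_two]
    obtain ⟨h1, _⟩ := hf d hd
    by_cases h : d (Sum.inl 1) = 0
    · have he : d (Sum.inl 0) = i := by omega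
      simp [h, he]; ring
    · have he : i ≠ d (Sum.inl 0) := by omega
      simp [he, zero_pow h]
  have hscale : ∀ (c : k) (w : Fin 2 → k),
      eval (Sum.elim (c • w) v) f = c ^ i * eval (Sum.elim w v) f := by
    intro c w
    conv_lhs => rw [← support_sum_monomial_coeff f]
    conv_rhs => rw [← support_sum_monomial_coeff f]
    rw [map_sum, map_sum, Finset.mul_sum]
    refine Finset.sum_congr rfl fun d hd => ?_
    rw [eval_monomial, eval_monomial,
      Finsupp.prod_fintype _ _ (fun s => pow_zero _), Fintype.prod_sum_type,
      Finsupp.prod_fintype _ _ (fun s => pow_zero _), Fintype.prod_sum_type]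
    simp only [Sum.elim_inl, Sum.elim_inr, Fin.prod_univ_two, Pi.smul_apply, smul_eq_mul,
      mul_pow]
    obtain ⟨h1, _⟩ := hf d hd
    rw [← h1, pow_add]; ring
  -- special value at ![1,0]
  have hspecial : ∀ c ∈ T, c.rep 1 = 0 → F.coeff i = 0 := by
    intro c hc h1
    have h0 : c.rep 0 ≠ 0 := by
      intro h0
      apply c.rep_nonzero
      funext s; fin_cases s <;> simp [h0, h1]
    have hrep : c.rep = (c.rep 0) • ![(1:k), 0] := by
      funext s; fin_cases s <;> simp [h1]
    have hz := H c hc c.rep c.rep_nonzero c.mk_rep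
    rw [hrep, hscale] at hz
    rw [hcoeff]
    exact (mul_eq_zero.mp hz).resolve_left (pow_ne_zero _ h0)
  have honeclass : ∀ c ∈ T, c.rep 1 = 0 → ∀ c' ∈ T, c'.rep 1 = 0 → c = c' := by
    intro c hc h1 c' hc' h1'
    have key : ∀ e : Projectivization k (Fin 2 → k), e.rep 1 = 0 →
        e = Projectivization.mk k ![(1:k), 0] (by
          intro h; have := congrFun h 0; simp at this) := by
      intro e he
      have h0 : e.rep 0 ≠ 0 := by
        intro h0; apply e.rep_nonzero; funext s; fin_cases s <;> simp [h0, he]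
      rw [← e.mk_rep]
      rw [Projectivization.mk_eq_mk_iff' ]
      exact ⟨e.rep 0, by funext s; fin_cases s <;> simp [he]⟩
    rw [key c h1, key c' h1']
  have hFz : F = 0 := by
    by_cases hF : F = 0
    · exact hF
    exfalso
    set T1 := T.filter (fun c => c.rep 1 ≠ 0) with hT1def
    set R := T1.image (fun c => c.rep 0 / c.rep 1) with hRdef
    have hinj : Set.InjOn (fun c : Projectivization k (Fin 2 → k) => c.rep 0 / c.rep 1) T1 := by
      intro a ha b hb hab
      have ha1 : a.rep 1 ≠ 0 := (Finset.mem_filter.mp ha).2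
      have hb1 : b.rep 1 ≠ 0 := (Finset.mem_filter.mp hb).2
      have key : ∀ e : Projectivization k (Fin 2 → k), (he : e.rep 1 ≠ 0) →
          e = Projectivization.mk k ![e.rep 0 / e.rep 1, (1:k)] (by
            intro h; have := congrFun h 1; simp at this) := by
        intro e he
        rw [← e.mk_rep, Projectivization.mk_eq_mk_iff']
        refine ⟨e.rep 1, ?_⟩
        funext s; fin_cases s <;> simp
        field_simp
      rw [key a ha1, key b hb1]
      simp only [hab]
    have hcardR : R.card = T1.card := Finset.card_image_of_injOn hinj
    have hroots : ∀ x ∈ R, F.eval x = 0 := by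
      intro x hx
      obtain ⟨c, hc, rfl⟩ := Finset.mem_image.mp hx
      have hc1 : c.rep 1 ≠ 0 := (Finset.mem_filter.mp hc).2
      have hcT : c ∈ T := (Finset.mem_filter.mp hc).1
      have hrep : c.rep = (c.rep 1) • ![c.rep 0 / c.rep 1, (1:k)] := by
        funext s; fin_cases s <;> simp
        field_simp
      have hz := H c hcT c.rep c.rep_nonzero c.mk_rep
      rw [hrep, hscale] at hz
      rw [hevalF]
      exact (mul_eq_zero.mp hz).resolve_left (pow_ne_zero _ hc1)
    have hdlt : F.natDegree < R.card := by
      by_cases hex : ∃ c ∈ T, c.rep 1 = 0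
      · obtain ⟨c0, hc0, hc01⟩ := hex
        have hci : F.coeff i = 0 := hspecial c0 hc0 hc01
        have hdi : F.natDegree < i := by
          rcases lt_or_eq_of_le hdeg with h | h
          · exact h
          · exfalso; apply hF
            rw [← Polynomial.leadingCoeff_eq_zero, Polynomial.leadingCoeff, h]
            exact hci
        -- T.card ≤ T1.card + 1
        have hsplit : T1.card + (T.filter (fun c => ¬ c.rep 1 ≠ 0)).card = T.card :=
          Finset.card_filter_add_card_filter_not _
        have hle1 : (T.filter (fun c => ¬ c.rep 1 ≠ 0)).card ≤ 1 := by
          apply Finset.card_le_one.mpr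
          intro a ha b hb
          have ha' := Finset.mem_filter.mp ha
          have hb' := Finset.mem_filter.mp hb
          exact honeclass a ha'.1 (not_not.mp ha'.2) b hb'.1 (not_not.mp hb'.2)
        rw [hcardR]; omega
      · push_neg at hex
        have : T1 = T := by
          apply Finset.filter_true_of_mem
          intro c hc; exact hex c hc
        rw [hcardR, this]; omega
    exact hF (Polynomial.eq_zero_of_natDegree_lt_card_of_eval_eq_zero' F R hroots hdlt)
  intro u
  by_cases hu1 : u 1 = 0
  · have hrep : u = (u 0) • ![(1:k), 0] := by
      funext s; fin_cases s <;> simp [hu1]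
    rw [hrep, hscale, ← hcoeff, hFz]
    simp
  · have hrep : u = (u 1) • ![u 0 / u 1, (1:k)] := by
      funext s; fin_cases s <;> simp
      field_simp
    rw [hrep, hscale, ← hevalF, hFz]
    simp


lemma swap_inj : Function.Injective (Sum.swap : Fin 2 ⊕ Fin 2 → Fin 2 ⊕ Fin 2) :=
  Function.LeftInverse.injective Sum.swap_leftInverse

lemma bihomog_swap {i j : ℕ} {f : BiPoly k} (hf : IsBihomog k i j f) :
    IsBihomog k j i (rename Sum.swap f) := by
  intro d hd
  rw [MvPolynomial.support_rename_of_injective swap_inj] at hd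
  obtain ⟨e, he, rfl⟩ := Finset.mem_image.mp hd
  obtain ⟨h1, h2⟩ := hf e he
  constructor
  · rw [show (Sum.inl 0 : Fin 2 ⊕ Fin 2) = Sum.swap (Sum.inr 0) from rfl,
      show (Sum.inl 1 : Fin 2 ⊕ Fin 2) = Sum.swap (Sum.inr 1) from rfl,
      Finsupp.mapDomain_apply swap_inj, Finsupp.mapDomain_apply swap_inj]
    exact h2
  · rw [show (Sum.inr 0 : Fin 2 ⊕ Fin 2) = Sum.swap (Sum.inl 0) from rfl,
      show (Sum.inr 1 : Fin 2 ⊕ Fin 2) = Sum.swap (Sum.inl 1) from rfl,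
      Finsupp.mapDomain_apply swap_inj, Finsupp.mapDomain_apply swap_inj]
    exact h1

end Scratch

namespace Scratch
variable {k : Type} [Field k]

lemma piece_eq (X : Finset (Pt k)) (P : Pt k) (hP : P ∈ X)
    (p q : ℕ)
    (hp : p = ((X.erase P).filter (fun P' => P'.1 = P.1)).card)
    (hq : q = ((X.erase P).filter (fun P' => P'.2 = P.2)).card)
    (i j : ℕ) (h : i < q ∨ j < p) :
    idealPiece k (X.erase P) i j = idealPiece k X i j := by
  apply le_antisymm
  · rintro f ⟨hf1, hf2⟩
    refine ⟨hf1, ?_⟩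
    intro P' hP'
    by_cases hPP : P' = P
    swap
    · exact hf2 P' (Finset.mem_erase.mpr ⟨hPP, hP'⟩)
    subst hPP
    intro u v hu hv h1 h2
    rcases h with hiq | hjp
    · set S := (X.erase P').filter (fun Q => Q.2 = P'.2) with hS
      set T := S.image (fun Q => Q.1) with hTdef
      have hcT : T.card = q := by
        rw [hq, hTdef]
        apply Finset.card_image_of_injOn
        intro a ha b hb hab
        have ha2 := (Finset.mem_filter.mp ha).2
        have hb2 := (Finset.mem_filter.mp hb).2
        exact Prod.ext hab (ha2.trans hb2.symm)
      have hT : i < T.card := by rw [hcT]; exact hiq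
      refine core i j f hf1 v T hT ?_ u
      intro c hc u' hu' hmk
      obtain ⟨Q, hQS, hQ1⟩ := Finset.mem_image.mp hc
      have hQe : Q ∈ X.erase P' := (Finset.mem_filter.mp hQS).1
      have hQ2 : Q.2 = P'.2 := (Finset.mem_filter.mp hQS).2
      exact hf2 Q hQe u' v hu' hv (hmk.trans hQ1.symm) (h2.trans hQ2.symm)
    · set f' := rename Sum.swap f with hf'def
      have hf' : IsBihomog k j i f' := bihomog_swap hf1
      set S := (X.erase P').filter (fun Q => Q.1 = P'.1) with hS
      set T := S.image (fun Q => Q.2) with hTdef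
      have hcT : T.card = p := by
        rw [hp, hTdef]
        apply Finset.card_image_of_injOn
        intro a ha b hb hab
        have ha2 := (Finset.mem_filter.mp ha).2
        have hb2 := (Finset.mem_filter.mp hb).2
        exact Prod.ext (ha2.trans hb2.symm) hab
      have hT : j < T.card := by rw [hcT]; exact hjp
      have hcore := core j i f' hf' u T hT ?_ v
      · rw [hf'def, eval_rename] at hcore
        have : (Sum.elim v u) ∘ Sum.swap = Sum.elim u v := by
          funext s; rcases s with s | s <;> rfl
        rwa [this] at hcore
      · intro c hc v' hv' hmk
        obtain ⟨Q, hQS, hQ2⟩ := Finset.mem_image.mp hc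
        have hQe : Q ∈ X.erase P' := (Finset.mem_filter.mp hQS).1
        have hQ1 : Q.1 = P'.1 := (Finset.mem_filter.mp hQS).2
        have hz := hf2 Q hQe u v' hu hv' (h1.trans hQ1.symm) (hmk.trans hQ2.symm)
        rw [hf'def, eval_rename]
        have : (Sum.elim v' u) ∘ Sum.swap = Sum.elim u v' := by
          funext s; rcases s with s | s <;> rfl
        rwa [this]
  · rintro f ⟨hf1, hf2⟩
    exact ⟨hf1, fun P' hP' => hf2 P' (Finset.mem_of_mem_erase hP')⟩

end Scratch

/-- A step of Theorem 3.1: for `Z = X \ {P}`, with `p` the number of points of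
`Z` on the `(1,0)`-line through `P` and `q` the number of points of `Z` on the
`(0,1)`-line through `P`, one has `h⁰(I_Z(i,j)) = h⁰(I_X(i,j))` whenever
`i < q` or `j < p`; consequently `ΔM_Z(i,j) = ΔM_X(i,j)` in that range. -/


theorem h0_eq_low_degrees (k : Type) [Field k] [IsAlgClosed k]
    (X : Finset (Pt k)) (P : Pt k) (hP : P ∈ X)
    (p q : ℕ)
    (hp : p = ((X.erase P).filter (fun P' => P'.1 = P.1)).card)
    (hq : q = ((X.erase P).filter (fun P' => P'.2 = P.2)).card) :
    (∀ i j : ℕ, i < q ∨ j < p →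
      Module.finrank k (idealPiece k (X.erase P) i j) = Module.finrank k (idealPiece k X i j)) ∧
    (∀ i j : ℤ, i < (q : ℤ) ∨ j < (p : ℤ) →
      diffMat (hilbMat k (X.erase P)) i j = diffMat (hilbMat k X) i j) := by
  have key : ∀ i j : ℕ, i < q ∨ j < p →
      idealPiece k (X.erase P) i j = idealPiece k X i j :=
    fun i j h => Scratch.piece_eq X P hP p q hp hq i j h
  constructor
  · intro i j h
    rw [key i j h]
  · intro i j h
    have hM : ∀ a b : ℤ, (a < (q:ℤ) ∨ b < (p:ℤ)) →
        hilbMat k (X.erase P) a b = hilbMat k X a b := by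
      intro a b hab
      unfold hilbMat
      split
      · next hcond =>
        have hc : a.toNat < q ∨ b.toNat < p := by omega
        rw [key _ _ hc]
      · rfl
    unfold diffMat
    rw [hM i j h, hM (i-1) j (by omega), hM i (j-1) (by omega), hM (i-1) (j-1) (by omega)]


end
end
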